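/- Let 2 ≤ s ≤ d, N ∈ ℕ, m ∈ ℕ, n_q ≤ m − 1, and let ξ_1,…,ξ_m ∈ ℝ^d and B > 0 satisfy |ξ_k · x| ≤ B for all x ∈ Ω ⊆ 𝔹 and all k. Let h^(0)(x) = ((ξ_k·x)_{k=1}^m) + B·𝟏 ∈ ℝ^m. Then there exist p = ⌈(2N+3)m/(s−1)⌉ filters u^(1),…,u^(p) each supported in {0,…,s} and bias vectors b^(1),…,b^(p) (each b^(j) for j < p having entries s+1 through m+(j−1)s all equal) such that the composition g(x) = σ(T^{u^(p)}(⋯σ(T^{u^(1)} h^(0)(x) − b^(1))⋯) − b^(p)) ∈ ℝ^{m+ps} satisfies: its ((j−1)m + k)-th component equals σ(ξ_k·x − t_j) for 1 ≤ k ≤ n_q and 1 ≤ j ≤ 2N+3, and equals 0 for all other indices, where t_j = −1 + (j−2)/N. -/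

import Mathlib

open Finset

/-- ReLU activation. -/
noncomputable def relu (u : ℝ) : ℝ := max u 0

/-- ceiling of `m / n` for natural numbers. -/
def ceilDiv' (m n : ℕ) : ℕ := (m + n - 1) / n

/-- A filter (sequence on ℤ) is supported in `{0, …, s}`. -/
def FilterSupp (s : ℕ) (w : ℤ → ℝ) : Prop :=
  ∀ k : ℤ, (k < 0 ∨ (s : ℤ) < k) → w k = 0

/-- A stack of convolutional ReLU layers with input width `D` and widths `D + j·s`. -/
noncomputable def convStack (s D : ℕ) (u : ℕ → ℤ → ℝ) (b : ℕ → ℕ → ℝ)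
    (v : ℕ → ℝ) : ℕ → ℕ → ℝ
  | 0 => v
  | j + 1 => fun i =>
      relu ((∑ k ∈ Finset.range (D + j * s),
          u (j + 1) ((i : ℤ) - (k : ℤ)) * convStack s D u b v j k) - b (j + 1) i)

/-- The knots `t_j = -1 + (j-2)/N` (with `j` 1-based). -/
noncomputable def knot (N j : ℕ) : ℝ := -1 + ((j : ℝ) - 2) / (N : ℝ)

open Polynomial

noncomputable def pcoef (q : Polynomial ℝ) : ℤ → ℝ :=
  fun k => if 0 ≤ k then q.coeff k.toNat else 0

noncomputable def normP (q : Polynomial ℝ) : ℝ :=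
  ∑ n ∈ Finset.range (q.natDegree + 1), |q.coeff n|

lemma normP_nonneg (q : Polynomial ℝ) : 0 ≤ normP q :=
  Finset.sum_nonneg fun _ _ => abs_nonneg _

lemma pcoef_eq_zero {q : Polynomial ℝ} {z : ℤ} (h : z < 0 ∨ (q.natDegree : ℤ) < z) :
    pcoef q z = 0 := by
  rcases h with h | h
  · simp [pcoef, not_le.mpr h]
  · have h0 : 0 ≤ z := le_trans (Int.ofNat_nonneg _) h.le
    have : q.natDegree < z.toNat := by omega
    simp [pcoef, h0, Polynomial.coeff_eq_zero_of_natDegree_lt this]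

lemma abs_pcoef_le (q : Polynomial ℝ) (z : ℤ) : |pcoef q z| ≤ normP q := by
  by_cases h0 : 0 ≤ z
  · by_cases hd : (q.natDegree : ℤ) < z
    · rw [pcoef_eq_zero (Or.inr hd)]; simpa using normP_nonneg q
    · have : z.toNat ∈ Finset.range (q.natDegree + 1) := by
        simp only [Finset.mem_range]; omega
      simpa [pcoef, h0, normP] using Finset.single_le_sum (f := fun n => |q.coeff n|)
        (fun _ _ => abs_nonneg _) this
  · rw [pcoef_eq_zero (Or.inl (not_le.mp h0))]; simpa using normP_nonneg q

lemma sum_abs_pcoef_le (q : Polynomial ℝ) (D : ℕ) (i : ℤ) :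
    ∑ k ∈ Finset.range D, |pcoef q (i - (k : ℤ))| ≤ normP q := by
  classical
  have h1 : ∑ k ∈ (Finset.range D).filter (fun k : ℕ => pcoef q (i - (k : ℤ)) ≠ 0),
      |pcoef q (i - (k : ℤ))| = ∑ k ∈ Finset.range D, |pcoef q (i - (k : ℤ))| := by
    apply Finset.sum_filter_of_ne
    intro k _ h hc
    exact h (by rw [hc, abs_zero])
  rw [← h1]
  set S := (Finset.range D).filter (fun k : ℕ => pcoef q (i - (k : ℤ)) ≠ 0) with hS
  have hmem : ∀ k ∈ S, 0 ≤ i - (k : ℤ) ∧ (i - (k : ℤ)).toNat ≤ q.natDegree := by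
    intro k hk
    have hne : pcoef q (i - (k : ℤ)) ≠ 0 := (Finset.mem_filter.mp hk).2
    constructor
    · by_contra hneg
      exact hne (pcoef_eq_zero (Or.inl (not_le.mp hneg)))
    · by_contra hgt
      refine hne (pcoef_eq_zero (Or.inr ?_))
      omega
  have h2 : ∑ k ∈ S, |pcoef q (i - (k : ℤ))|
      = ∑ n ∈ S.image (fun k : ℕ => (i - (k : ℤ)).toNat), |q.coeff n| := by
    rw [Finset.sum_image]
    · apply Finset.sum_congr rfl
      intro k hk
      have := (hmem k hk).1
      simp only [pcoef, if_pos this]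
    · intro x hx y hy hxy
      have h1 := (hmem x hx).1
      have h2 := (hmem y hy).1
      have hxy' : (i - (x : ℤ)).toNat = (i - (y : ℤ)).toNat := hxy
      omega
  rw [h2]
  apply Finset.sum_le_sum_of_subset_of_nonneg
  · intro n hn
    simp only [Finset.mem_image] at hn
    obtain ⟨k, hk, rfl⟩ := hn
    simp only [Finset.mem_range]
    exact Nat.lt_succ_of_le (hmem k hk).2
  · intro _ _ _
    exact abs_nonneg _

lemma abs_conv_le (q : Polynomial ℝ) (D : ℕ) (i : ℤ) (v : ℕ → ℝ) (S : ℝ) (hS : 0 ≤ S)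
    (hv : ∀ k < D, |v k| ≤ S) :
    |∑ k ∈ Finset.range D, pcoef q (i - (k : ℤ)) * v k| ≤ normP q * S := by
  calc |∑ k ∈ Finset.range D, pcoef q (i - (k : ℤ)) * v k|
      ≤ ∑ k ∈ Finset.range D, |pcoef q (i - (k : ℤ)) * v k| :=
        Finset.abs_sum_le_sum_abs _ _
    _ ≤ ∑ k ∈ Finset.range D, |pcoef q (i - (k : ℤ))| * S := by
        apply Finset.sum_le_sum
        intro k hk
        rw [abs_mul]
        exact mul_le_mul_of_nonneg_left (hv k (Finset.mem_range.mp hk)) (abs_nonneg _)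
    _ = (∑ k ∈ Finset.range D, |pcoef q (i - (k : ℤ))|) * S := by rw [Finset.sum_mul]
    _ ≤ normP q * S := mul_le_mul_of_nonneg_right (sum_abs_pcoef_le q D i) hS

lemma pcoef_mul (q r : Polynomial ℝ) (z : ℤ) :
    pcoef (q * r) z = ∑ a ∈ Finset.range (q.natDegree + 1), q.coeff a * pcoef r (z - (a : ℤ)) := by
  by_cases hz : 0 ≤ z
  · set n := z.toNat with hn
    set E := max n q.natDegree with hE
    have h1 : pcoef (q * r) z = ∑ a ∈ Finset.range (n + 1), q.coeff a * r.coeff (n - a) := by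
      simp only [pcoef, if_pos hz, ← hn]
      rw [Polynomial.coeff_mul, Finset.Nat.sum_antidiagonal_eq_sum_range_succ_mk]
    have h2 : ∑ a ∈ Finset.range (n + 1), q.coeff a * r.coeff (n - a)
        = ∑ a ∈ Finset.range (n + 1), q.coeff a * pcoef r (z - (a : ℤ)) := by
      apply Finset.sum_congr rfl
      intro a ha
      have ha' : a ≤ n := by simpa [Nat.lt_succ_iff] using Finset.mem_range.mp ha
      have h0 : 0 ≤ z - (a : ℤ) := by omega
      have h3 : (z - (a : ℤ)).toNat = n - a := by omega
      simp only [pcoef, if_pos h0, h3]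
    have h4 : ∑ a ∈ Finset.range (n + 1), q.coeff a * pcoef r (z - (a : ℤ))
        = ∑ a ∈ Finset.range (E + 1), q.coeff a * pcoef r (z - (a : ℤ)) := by
      apply Finset.sum_subset (Finset.range_subset_range.mpr (Nat.add_le_add_right (le_max_left _ _) 1))
      intro a _ ha
      have hna : n < a := by simpa [Nat.lt_succ_iff] using ha
      have : pcoef r (z - (a : ℤ)) = 0 := pcoef_eq_zero (Or.inl (by omega))
      rw [this, mul_zero]
    have h5 : ∑ a ∈ Finset.range (q.natDegree + 1), q.coeff a * pcoef r (z - (a : ℤ))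
        = ∑ a ∈ Finset.range (E + 1), q.coeff a * pcoef r (z - (a : ℤ)) := by
      apply Finset.sum_subset (Finset.range_subset_range.mpr (Nat.add_le_add_right (le_max_right _ _) 1))
      intro a _ ha
      have hna : q.natDegree < a := by simpa [Nat.lt_succ_iff] using ha
      rw [Polynomial.coeff_eq_zero_of_natDegree_lt hna, zero_mul]
    rw [h1, h2, h4, h5]
  · rw [pcoef_eq_zero (Or.inl (not_le.mp hz))]
    symm
    apply Finset.sum_eq_zero
    intro a _
    have : pcoef r (z - (a : ℤ)) = 0 := pcoef_eq_zero (Or.inl (by omega))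
    rw [this, mul_zero]

lemma pcoef_mul_conv (q r : Polynomial ℝ) (D k' : ℕ) (i : ℤ)
    (hD : q.natDegree + k' < D) :
    ∑ k ∈ Finset.range D, pcoef r (i - (k : ℤ)) * pcoef q ((k : ℤ) - (k' : ℤ))
      = pcoef (q * r) (i - (k' : ℤ)) := by
  rw [pcoef_mul]
  have hsub : Finset.Ico k' (k' + (q.natDegree + 1)) ⊆ Finset.range D := by
    intro t ht
    rw [Finset.mem_Ico] at ht
    rw [Finset.mem_range]
    omega
  rw [← Finset.sum_subset hsub]
  · rw [Finset.sum_Ico_eq_sum_range]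
    have heq : k' + (q.natDegree + 1) - k' = q.natDegree + 1 := by omega
    rw [heq]
    apply Finset.sum_congr rfl
    intro a _
    have h1 : ((k' + a : ℕ) : ℤ) - (k' : ℤ) = (a : ℤ) := by push_cast; ring
    have h2 : pcoef q ((a : ℕ) : ℤ) = q.coeff a := by simp [pcoef]
    have h3 : i - ((k' + a : ℕ) : ℤ) = i - (k' : ℤ) - (a : ℤ) := by push_cast; ring
    rw [h1, h2, h3, mul_comm]
  · intro k _ hk
    rw [Finset.mem_Ico] at hk
    rcases Nat.lt_or_ge k k' with h | h
    · have : pcoef q ((k : ℤ) - (k' : ℤ)) = 0 := pcoef_eq_zero (Or.inl (by omega))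
      rw [this, mul_zero]
    · have : pcoef q ((k : ℤ) - (k' : ℤ)) = 0 := pcoef_eq_zero (Or.inr (by omega))
      rw [this, mul_zero]

lemma prod_range_getD (l : List (Polynomial ℝ)) :
    ∏ t ∈ Finset.range l.length, l.getD t 1 = l.prod := by
  induction l with
  | nil => simp
  | cons q t ih =>
    rw [List.length_cons, Finset.prod_range_succ', List.prod_cons, ← ih]
    simp [mul_comm]

lemma getD_natDegree_le (l : List (Polynomial ℝ)) (s : ℕ)
    (h : ∀ q ∈ l, Polynomial.natDegree q ≤ s) (n : ℕ) :
    (l.getD n 1).natDegree ≤ s := by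
  by_cases hn : n < l.length
  · rw [List.getD_eq_getElem l 1 hn]
    exact h _ (List.getElem_mem hn)
  · rw [List.getD_eq_default l 1 (not_lt.mp hn)]
    simp

/-- Greedy grouping of a list of low-degree polynomials into at most
`⌈(degsum + s - 1)/(s-1)⌉`-many chunks each of degree at most `s`. -/
lemma group_factors (s : ℕ) (hs : 2 ≤ s) :
    ∀ (l : List (Polynomial ℝ)) (a : Polynomial ℝ), a ≠ 0 → a.natDegree ≤ s →
    (∀ q ∈ l, 1 ≤ q.natDegree ∧ q.natDegree ≤ 2) →
    ∃ l' : List (Polynomial ℝ),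
      (∀ q ∈ l', q.natDegree ≤ s) ∧ l'.prod = a * l.prod ∧
      (s - 1) * l'.length ≤ a.natDegree + (l.map Polynomial.natDegree).sum + (s - 1) := by
  intro l
  induction l with
  | nil =>
    intro a ha hda _
    exact ⟨[a], by simpa using hda, by simp, by simp⟩
  | cons q t ih =>
    intro a ha hda hl
    have hq : 1 ≤ q.natDegree ∧ q.natDegree ≤ 2 := hl q List.mem_cons_self
    have hq0 : q ≠ 0 := fun h => by simp [h] at hq
    have ht : ∀ r ∈ t, 1 ≤ r.natDegree ∧ r.natDegree ≤ 2 :=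
      fun r hr => hl r (List.mem_cons_of_mem q hr)
    have hdm : (a * q).natDegree = a.natDegree + q.natDegree :=
      Polynomial.natDegree_mul ha hq0
    by_cases hcase : a.natDegree + q.natDegree ≤ s
    · obtain ⟨l', h1, h2, h3⟩ := ih (a * q) (mul_ne_zero ha hq0) (by omega) ht
      refine ⟨l', h1, by rw [h2, List.prod_cons]; ring, ?_⟩
      rw [hdm] at h3
      simp only [List.map_cons, List.sum_cons]
      omega
    · obtain ⟨l', h1, h2, h3⟩ := ih q hq0 (le_trans hq.2 hs) ht
      refine ⟨a :: l', ?_, by rw [List.prod_cons, h2, List.prod_cons], ?_⟩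
      · intro r hr
        rcases List.mem_cons.mp hr with h | h
        · rw [h]; exact hda
        · exact h1 r h
      · simp only [List.map_cons, List.sum_cons, List.length_cons]
        have hage : s - 1 ≤ a.natDegree := by omega
        calc (s - 1) * (l'.length + 1) = (s - 1) * l'.length + (s - 1) := by ring
        _ ≤ (q.natDegree + (t.map Polynomial.natDegree).sum + (s - 1)) + (s - 1) := by omega
        _ ≤ a.natDegree + (q.natDegree + (t.map Polynomial.natDegree).sum) + (s - 1) := by omega

lemma relu_of_nonneg {x : ℝ} (h : 0 ≤ x) : relu x = x := max_eq_left h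

lemma relu_of_nonpos {x : ℝ} (h : x ≤ 0) : relu x = 0 := max_eq_right h

lemma pcoef_one (z : ℤ) : pcoef (1 : Polynomial ℝ) z = if z = 0 then 1 else 0 := by
  by_cases h0 : 0 ≤ z
  · simp only [pcoef, if_pos h0, Polynomial.coeff_one]
    by_cases hz : z = 0
    · simp [hz]
    · have : z.toNat ≠ 0 := by omega
      simp [this, hz]
  · rw [pcoef_eq_zero (Or.inl (not_le.mp h0)), if_neg (by omega)]

noncomputable def Ppoly (Q m : ℕ) : Polynomial ℝ :=
  ∑ r ∈ Finset.range Q, Polynomial.X ^ (r * m)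

lemma coeff_Ppoly (Q m n : ℕ) (hm : 1 ≤ m) :
    (Ppoly Q m).coeff n = if ∃ r, r < Q ∧ n = r * m then 1 else 0 := by
  rw [Ppoly, Polynomial.finset_sum_coeff]
  simp only [Polynomial.coeff_X_pow]
  by_cases h : ∃ r, r < Q ∧ n = r * m
  · obtain ⟨r0, hr0, rfl⟩ := h
    rw [if_pos ⟨r0, hr0, rfl⟩]
    rw [Finset.sum_eq_single_of_mem r0 (Finset.mem_range.mpr hr0)]
    · simp
    · intro r _ hne
      rw [if_neg]
      intro hcon
      exact hne (Nat.eq_of_mul_eq_mul_right hm hcon.symm)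
  · rw [if_neg h]
    apply Finset.sum_eq_zero
    intro r hr
    rw [if_neg]
    intro hcon
    exact h ⟨r, Finset.mem_range.mp hr, hcon⟩

lemma sum_pcoef_Ppoly (Q m : ℕ) (hm : 1 ≤ m) (j k : ℕ) (hj : 1 ≤ j) (hjQ : j ≤ Q)
    (hk : k < m) (v : ℕ → ℝ) :
    ∑ k' ∈ Finset.range m,
      pcoef (Ppoly Q m) ((((j - 1) * m + k : ℕ) : ℤ) - (k' : ℤ)) * v k' = v k := by
  rw [Finset.sum_eq_single_of_mem k (Finset.mem_range.mpr hk)]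
  · have h0 : (0 : ℤ) ≤ (((j - 1) * m + k : ℕ) : ℤ) - (k : ℤ) := by
      have : (k : ℤ) ≤ (((j - 1) * m + k : ℕ) : ℤ) := by exact_mod_cast Nat.le_add_left k _
      omega
    have ht : ((((j - 1) * m + k : ℕ) : ℤ) - (k : ℤ)).toNat = (j - 1) * m := by omega
    rw [show pcoef (Ppoly Q m) ((((j - 1) * m + k : ℕ) : ℤ) - (k : ℤ))
        = (Ppoly Q m).coeff ((j - 1) * m) by simp only [pcoef, if_pos h0, ht]]
    rw [coeff_Ppoly Q m _ hm, if_pos ⟨j - 1, by omega, rfl⟩, one_mul]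
  · intro k' hk' hne
    rw [Finset.mem_range] at hk'
    by_cases hneg : (((j - 1) * m + k : ℕ) : ℤ) - (k' : ℤ) < 0
    · rw [pcoef_eq_zero (Or.inl hneg), zero_mul]
    · push_neg at hneg
      have ht : ((((j - 1) * m + k : ℕ) : ℤ) - (k' : ℤ)).toNat = (j - 1) * m + k - k' := by
        omega
      rw [show pcoef (Ppoly Q m) ((((j - 1) * m + k : ℕ) : ℤ) - (k' : ℤ))
          = (Ppoly Q m).coeff ((j - 1) * m + k - k') by simp only [pcoef, if_pos hneg, ht]]
      have hge : k' ≤ (j - 1) * m + k := by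
        by_contra hcon
        have : (((j - 1) * m + k : ℕ) : ℤ) < (k' : ℤ) := by exact_mod_cast by omega
        omega
      rw [coeff_Ppoly Q m _ hm, if_neg, zero_mul]
      rintro ⟨r, _, hr⟩
      have hj1 : (j - 1) * m + k = r * m + k' := by omega
      rcases lt_trichotomy (j - 1) r with h | h | h
      · have : (j - 1) * m + m ≤ r * m := by
          calc (j - 1) * m + m = (j - 1 + 1) * m := by ring
          _ ≤ r * m := Nat.mul_le_mul_right m (by omega)
        omega
      · rw [h] at hj1; omega
      · have : r * m + m ≤ (j - 1) * m := by
          calc r * m + m = (r + 1) * m := by ring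
          _ ≤ (j - 1) * m := Nat.mul_le_mul_right m (by omega)
        omega

lemma Ppoly_coeff_m (Q m : ℕ) (hm : 1 ≤ m) (hQ : 2 ≤ Q) : (Ppoly Q m).coeff m = 1 := by
  rw [coeff_Ppoly Q m m hm, if_pos ⟨1, by omega, by omega⟩]

lemma Ppoly_ne_zero (Q m : ℕ) (hm : 1 ≤ m) (hQ : 2 ≤ Q) : Ppoly Q m ≠ 0 := by
  intro h
  have := Ppoly_coeff_m Q m hm hQ
  rw [h] at this
  simp at this

lemma Ppoly_natDegree_le (Q m : ℕ) : (Ppoly Q m).natDegree ≤ (Q - 1) * m := by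
  apply Polynomial.natDegree_sum_le_of_forall_le
  intro r hr
  calc (Polynomial.X ^ (r * m) : Polynomial ℝ).natDegree ≤ r * m :=
    le_of_eq (Polynomial.natDegree_X_pow _)
  _ ≤ (Q - 1) * m := Nat.mul_le_mul_right m (by have := Finset.mem_range.mp hr; omega)

lemma Ppoly_not_unit (Q m : ℕ) (hm : 1 ≤ m) (hQ : 2 ≤ Q) : ¬ IsUnit (Ppoly Q m) := by
  intro h
  have h1 : (Ppoly Q m).natDegree = 0 := Polynomial.natDegree_eq_zero_of_isUnit h
  have h2 : m ≤ (Ppoly Q m).natDegree := by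
    apply Polynomial.le_natDegree_of_ne_zero
    rw [Ppoly_coeff_m Q m hm hQ]
    norm_num
  omega

/-- The per-layer correction vector `e j` and positivity constant `C j`. -/
noncomputable def eC (m s : ℕ) (B : ℝ) (w : ℕ → Polynomial ℝ) : ℕ → (ℕ → ℝ) × ℝ
  | 0 => (fun _ => 0, 0)
  | j + 1 =>
    let prev := eC m s B w j
    let Cj : ℝ := normP (w (j + 1)) *
      (2 * B * normP (∏ t ∈ Finset.range j, w (t + 1)) +
        ∑ i ∈ Finset.range (m + j * s), |prev.1 i|)
    (fun i => (∑ k ∈ Finset.range (m + j * s),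
        pcoef (w (j + 1)) ((i : ℤ) - (k : ℤ)) * prev.1 k) + Cj, Cj)

lemma eC_snd_succ (m s : ℕ) (B : ℝ) (w : ℕ → Polynomial ℝ) (j : ℕ) :
    (eC m s B w (j + 1)).2 = normP (w (j + 1)) *
      (2 * B * normP (∏ t ∈ Finset.range j, w (t + 1)) +
        ∑ i ∈ Finset.range (m + j * s), |(eC m s B w j).1 i|) := rfl

lemma eC_fst_succ (m s : ℕ) (B : ℝ) (w : ℕ → Polynomial ℝ) (j : ℕ) (i : ℕ) :
    (eC m s B w (j + 1)).1 i = (∑ k ∈ Finset.range (m + j * s),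
        pcoef (w (j + 1)) ((i : ℤ) - (k : ℤ)) * (eC m s B w j).1 k) + (eC m s B w (j + 1)).2 := rfl

/-- Lemma 5: a group of convolutional layers produces the ridge functions
`σ(ξ_k·x − t_j)`. -/
theorem dcnn_ridge_functions
    (d s N m nq : ℕ) (hs : 2 ≤ s) (hsd : s ≤ d) (hN : 1 ≤ N)
    (hnq : nq ≤ m - 1) (hm : 1 ≤ m)
    (Ω : Set (EuclideanSpace ℝ (Fin d))) (hΩ : Ω ⊆ Metric.closedBall 0 1)
    (ξ : ℕ → EuclideanSpace ℝ (Fin d)) (B : ℝ) (hB : 0 < B)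
    (hbd : ∀ k < m, ∀ x ∈ Ω, |∑ i, ξ k i * x i| ≤ B) :
    ∃ (u : ℕ → ℤ → ℝ) (b : ℕ → ℕ → ℝ),
      (∀ j, FilterSupp s (u j)) ∧
      (∀ j, 1 ≤ j → j < ceilDiv' ((2 * N + 3) * m) (s - 1) →
        ∀ i1 i2, s ≤ i1 → i1 < m + (j - 1) * s → s ≤ i2 → i2 < m + (j - 1) * s →
          b j i1 = b j i2) ∧
      ∀ x ∈ Ω,
        (∀ j, 1 ≤ j → j ≤ 2 * N + 3 → ∀ k < nq,
          convStack s m u b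
              (fun k' => if k' < m then (∑ i, ξ k' i * x i) + B else 0)
              (ceilDiv' ((2 * N + 3) * m) (s - 1)) ((j - 1) * m + k) =
            relu ((∑ i, ξ k i * x i) - knot N j)) ∧
        (∀ i' < m + ceilDiv' ((2 * N + 3) * m) (s - 1) * s,
          (¬ ∃ j k, 1 ≤ j ∧ j ≤ 2 * N + 3 ∧ k < nq ∧ i' = (j - 1) * m + k) →
            convStack s m u b
                (fun k' => if k' < m then (∑ i, ξ k' i * x i) + B else 0)
                (ceilDiv' ((2 * N + 3) * m) (s - 1)) i' = 0) := by
  classical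
  set Q : ℕ := 2 * N + 3 with hQdef
  set p : ℕ := ceilDiv' (Q * m) (s - 1) with hpdef
  have hQ2 : 2 ≤ Q := by omega
  have hnqm : nq < m := by omega
  have hQm1 : 1 ≤ Q * m := Nat.one_le_iff_ne_zero.mpr (Nat.mul_ne_zero (by omega) (by omega))
  have hQmm : (Q - 1) * m + m = Q * m := by
    conv_rhs => rw [show Q = (Q - 1) + 1 by omega]
    rw [Nat.succ_mul]
  have hp1 : 1 ≤ p := by
    rw [hpdef, ceilDiv']
    rw [Nat.le_div_iff_mul_le (by omega)]
    omega
  set P : Polynomial ℝ := Ppoly Q m with hPdef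
  have hP0 : P ≠ 0 := Ppoly_ne_zero Q m hm hQ2
  -- build the list of factors
  obtain ⟨L, hLlen, hLdeg, hLprod⟩ :
      ∃ L : List (Polynomial ℝ), L.length = p ∧ (∀ q ∈ L, q.natDegree ≤ s) ∧ L.prod = P := by
    obtain ⟨c, hc⟩ := UniqueFactorizationMonoid.factors_prod hP0
    have hmemF : ∀ q ∈ UniqueFactorizationMonoid.factors P, Irreducible q :=
      fun q hq => UniqueFactorizationMonoid.irreducible_of_factor q hq
    have hFdeg : ∀ q ∈ (UniqueFactorizationMonoid.factors P).toList,
        1 ≤ q.natDegree ∧ q.natDegree ≤ 2 := by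
      intro q hq
      have hirr := hmemF q (by rwa [← Multiset.mem_toList])
      exact ⟨hirr.natDegree_pos, hirr.natDegree_le_two⟩
    have h0F : (0 : Polynomial ℝ) ∉ UniqueFactorizationMonoid.factors P :=
      fun h => (hmemF 0 h).ne_zero rfl
    have hprodne : (UniqueFactorizationMonoid.factors P).prod ≠ 0 := by
      intro h
      rw [h, zero_mul] at hc
      exact hP0 hc.symm
    have hdegsum : ((UniqueFactorizationMonoid.factors P).toList.map Polynomial.natDegree).sum
        ≤ (Q - 1) * m := by
      have hnat : (UniqueFactorizationMonoid.factors P).prod.natDegree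
          = ((UniqueFactorizationMonoid.factors P).map Polynomial.natDegree).sum :=
        Polynomial.natDegree_multiset_prod _ h0F
      have hls : ((UniqueFactorizationMonoid.factors P).toList.map Polynomial.natDegree).sum
          = ((UniqueFactorizationMonoid.factors P).map Polynomial.natDegree).sum := by
        conv_rhs => rw [← Multiset.coe_toList (UniqueFactorizationMonoid.factors P)]
        rw [Multiset.map_coe, Multiset.sum_coe]
      have hPd : P.natDegree = (UniqueFactorizationMonoid.factors P).prod.natDegree := by
        conv_lhs => rw [← hc]
        rw [Polynomial.natDegree_mul hprodne (Units.ne_zero c),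
          Polynomial.natDegree_eq_zero_of_isUnit c.isUnit, add_zero]
      rw [hls, ← hnat, ← hPd]
      exact Ppoly_natDegree_le Q m
    obtain ⟨l', h1, h2, h3⟩ := group_factors s hs (UniqueFactorizationMonoid.factors P).toList
      (c : Polynomial ℝ) (Units.ne_zero c)
      (by rw [Polynomial.natDegree_eq_zero_of_isUnit c.isUnit]; omega) hFdeg
    have hlprod : l'.prod = P := by
      rw [h2, Multiset.prod_toList, mul_comm, hc]
    have hcdeg : (c : Polynomial ℝ).natDegree = 0 :=
      Polynomial.natDegree_eq_zero_of_isUnit c.isUnit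
    have hlen : l'.length ≤ p := by
      rw [hpdef, ceilDiv', Nat.le_div_iff_mul_le (by omega), mul_comm]
      omega
    refine ⟨l' ++ List.replicate (p - l'.length) 1, ?_, ?_, ?_⟩
    · rw [List.length_append, List.length_replicate]; omega
    · intro q hq
      rcases List.mem_append.mp hq with h | h
      · exact h1 q h
      · rw [List.eq_of_mem_replicate h]; simp
    · rw [List.prod_append, List.prod_replicate, one_pow, mul_one, hlprod]
  set w : ℕ → Polynomial ℝ := fun j => L.getD (j - 1) 1 with hwdef
  set u : ℕ → ℤ → ℝ := fun j => pcoef (w j) with hudef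
  have hwdeg : ∀ j, (w j).natDegree ≤ s := fun j => getD_natDegree_le L s hLdeg _
  set Wp : ℕ → Polynomial ℝ := fun j => ∏ t ∈ Finset.range j, w (t + 1) with hWdef
  have hWdeg : ∀ j, (Wp j).natDegree ≤ j * s := by
    intro j
    calc (Wp j).natDegree ≤ ∑ t ∈ Finset.range j, (w (t + 1)).natDegree :=
          Polynomial.natDegree_prod_le _ _
    _ ≤ ∑ t ∈ Finset.range j, s := Finset.sum_le_sum fun t _ => hwdeg (t + 1)
    _ = j * s := by rw [Finset.sum_const, Finset.card_range, smul_eq_mul]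
  have hWsucc : ∀ j, Wp (j + 1) = Wp j * w (j + 1) := by
    intro j
    rw [hWdef]
    exact Finset.prod_range_succ _ _
  have hWP : Wp p = P := by
    rw [hWdef]
    calc (∏ t ∈ Finset.range p, w (t + 1))
        = ∏ t ∈ Finset.range L.length, L.getD t 1 := by
          rw [hLlen]
          exact Finset.prod_congr rfl fun t _ => by rw [hwdef]; norm_num
    _ = L.prod := prod_range_getD L
    _ = P := hLprod
  set e : ℕ → ℕ → ℝ := fun j => (eC m s B w j).1 with hedef
  set Cc : ℕ → ℝ := fun j => (eC m s B w j).2 with hCdef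
  set β : ℕ → ℝ := fun i =>
    if ∃ j k, 1 ≤ j ∧ j ≤ Q ∧ k < nq ∧ i = (j - 1) * m + k then B + knot N (i / m + 1)
    else 2 * B * normP P + 1 with hβdef
  set b : ℕ → ℕ → ℝ := fun j i =>
    if j = p then
      (∑ k ∈ Finset.range (m + (p - 1) * s),
        pcoef (w p) ((i : ℤ) - (k : ℤ)) * e (p - 1) k) + β i
    else if 1 ≤ j then -(Cc j) else 0 with hbdef
  refine ⟨u, b, ?_, ?_, ?_⟩
  · intro j k hk
    rcases hk with hneg | hgt
    · exact pcoef_eq_zero (Or.inl hneg)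
    · refine pcoef_eq_zero (Or.inr ?_)
      have := hwdeg j
      omega
  · intro j hj hjp i1 i2 _ _ _ _
    simp only [hbdef, if_neg (Nat.ne_of_lt hjp), if_pos hj]
  · intro x hx
    set h₀ : ℕ → ℝ := fun k' => if k' < m then (∑ i, ξ k' i * x i) + B else 0 with hh₀
    have hB2 : ∀ k, |h₀ k| ≤ 2 * B := by
      intro k
      rw [hh₀]
      by_cases hkm : k < m
      · simp only [if_pos hkm]
        have h := hbd k hkm x hx
        rw [abs_le] at h ⊢
        constructor <;> linarith [h.1, h.2]
      · simp only [if_neg hkm, abs_zero]; linarith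
    -- the key induction: the first p-1 layers act linearly
    have key : ∀ j, j + 1 ≤ p → ∀ i, convStack s m u b h₀ j i
        = (∑ k' ∈ Finset.range m, pcoef (Wp j) ((i : ℤ) - (k' : ℤ)) * h₀ k') + e j i := by
      intro j
      induction j with
      | zero =>
        intro _ i
        have hW0 : Wp 0 = 1 := by rw [hWdef]; simp
        have he0 : e 0 i = 0 := rfl
        show h₀ i = _
        rw [hW0, he0, add_zero]
        by_cases him : i < m
        · rw [Finset.sum_eq_single_of_mem i (Finset.mem_range.mpr him)]
          · rw [pcoef_one, if_pos (by omega), one_mul]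
          · intro k' _ hne
            rw [pcoef_one, if_neg (by omega), zero_mul]
        · have hz : h₀ i = 0 := by rw [hh₀]; simp [him]
          rw [hz]
          symm
          apply Finset.sum_eq_zero
          intro k' hk'
          rw [Finset.mem_range] at hk'
          rw [pcoef_one, if_neg (by omega), zero_mul]
      | succ j ih =>
        intro hjp i
        have ihh := ih (by omega)
        have hunf : convStack s m u b h₀ (j + 1) i
            = relu ((∑ k ∈ Finset.range (m + j * s),
              u (j + 1) ((i : ℤ) - (k : ℤ)) * convStack s m u b h₀ j k) - b (j + 1) i) := rfl
        rw [hunf]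
        have hbj : b (j + 1) i = -(Cc (j + 1)) := by
          simp only [hbdef]
          rw [if_neg (by omega : ¬ j + 1 = p), if_pos (by omega : 1 ≤ j + 1)]
        have hrw : (∑ k ∈ Finset.range (m + j * s),
              u (j + 1) ((i : ℤ) - (k : ℤ)) * convStack s m u b h₀ j k)
            = ∑ k ∈ Finset.range (m + j * s), pcoef (w (j + 1)) ((i : ℤ) - (k : ℤ)) *
              ((∑ k' ∈ Finset.range m, pcoef (Wp j) ((k : ℤ) - (k' : ℤ)) * h₀ k') + e j k) := by
          apply Finset.sum_congr rfl
          intro k _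
          rw [ihh k]
        rw [hrw, hbj]
        -- split the sum
        have hsplit : ∀ E : ℕ → ℝ, (∑ k ∈ Finset.range (m + j * s),
              pcoef (w (j + 1)) ((i : ℤ) - (k : ℤ)) *
              ((∑ k' ∈ Finset.range m, pcoef (Wp j) ((k : ℤ) - (k' : ℤ)) * h₀ k') + E k))
            = (∑ k' ∈ Finset.range m, pcoef (Wp (j + 1)) ((i : ℤ) - (k' : ℤ)) * h₀ k')
              + ∑ k ∈ Finset.range (m + j * s),
                pcoef (w (j + 1)) ((i : ℤ) - (k : ℤ)) * E k := by
          intro E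
          simp only [mul_add, Finset.sum_add_distrib]
          congr 1
          calc ∑ k ∈ Finset.range (m + j * s), pcoef (w (j + 1)) ((i : ℤ) - (k : ℤ)) *
                (∑ k' ∈ Finset.range m, pcoef (Wp j) ((k : ℤ) - (k' : ℤ)) * h₀ k')
              = ∑ k ∈ Finset.range (m + j * s), ∑ k' ∈ Finset.range m,
                  pcoef (w (j + 1)) ((i : ℤ) - (k : ℤ)) *
                  (pcoef (Wp j) ((k : ℤ) - (k' : ℤ)) * h₀ k') := by
                simp only [Finset.mul_sum]
          _ = ∑ k' ∈ Finset.range m, ∑ k ∈ Finset.range (m + j * s),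
                  pcoef (w (j + 1)) ((i : ℤ) - (k : ℤ)) *
                  (pcoef (Wp j) ((k : ℤ) - (k' : ℤ)) * h₀ k') := Finset.sum_comm
          _ = ∑ k' ∈ Finset.range m, (∑ k ∈ Finset.range (m + j * s),
                  pcoef (w (j + 1)) ((i : ℤ) - (k : ℤ)) *
                  pcoef (Wp j) ((k : ℤ) - (k' : ℤ))) * h₀ k' := by
                apply Finset.sum_congr rfl
                intro k' _
                rw [Finset.sum_mul]
                apply Finset.sum_congr rfl
                intro k _
                ring
          _ = ∑ k' ∈ Finset.range m, pcoef (Wp (j + 1)) ((i : ℤ) - (k' : ℤ)) * h₀ k' := by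
                apply Finset.sum_congr rfl
                intro k' hk'
                rw [Finset.mem_range] at hk'
                rw [pcoef_mul_conv (Wp j) (w (j + 1)) (m + j * s) k' i
                  (by have := hWdeg j; omega), ← hWsucc j]
        rw [hsplit (e j)]
        set A := ∑ k' ∈ Finset.range m, pcoef (Wp (j + 1)) ((i : ℤ) - (k' : ℤ)) * h₀ k' with hA
        set T := ∑ k ∈ Finset.range (m + j * s),
          pcoef (w (j + 1)) ((i : ℤ) - (k : ℤ)) * e j k with hT
        have heC : e (j + 1) i = T + Cc (j + 1) := eC_fst_succ m s B w j i
        have hCsucc : Cc (j + 1) = normP (w (j + 1)) *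
            (2 * B * normP (Wp j) + ∑ i' ∈ Finset.range (m + j * s), |e j i'|) :=
          eC_snd_succ m s B w j
        have habs : |A + T| ≤ Cc (j + 1) := by
          have hcomb : A + T = ∑ k ∈ Finset.range (m + j * s),
              pcoef (w (j + 1)) ((i : ℤ) - (k : ℤ)) *
              ((∑ k' ∈ Finset.range m, pcoef (Wp j) ((k : ℤ) - (k' : ℤ)) * h₀ k') + e j k) :=
            (hsplit (e j)).symm
          calc |A + T| = |∑ k ∈ Finset.range (m + j * s),
              pcoef (w (j + 1)) ((i : ℤ) - (k : ℤ)) *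
              ((∑ k' ∈ Finset.range m, pcoef (Wp j) ((k : ℤ) - (k' : ℤ)) * h₀ k') + e j k)| := by
                rw [hcomb]
          _ ≤ ∑ k ∈ Finset.range (m + j * s), |pcoef (w (j + 1)) ((i : ℤ) - (k : ℤ)) *
              ((∑ k' ∈ Finset.range m, pcoef (Wp j) ((k : ℤ) - (k' : ℤ)) * h₀ k') + e j k)| :=
                Finset.abs_sum_le_sum_abs _ _
          _ ≤ ∑ k ∈ Finset.range (m + j * s), |pcoef (w (j + 1)) ((i : ℤ) - (k : ℤ))| *
              (normP (Wp j) * (2 * B) + |e j k|) := by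
                apply Finset.sum_le_sum
                intro k _
                rw [abs_mul]
                apply mul_le_mul_of_nonneg_left _ (abs_nonneg _)
                calc |(∑ k' ∈ Finset.range m, pcoef (Wp j) ((k : ℤ) - (k' : ℤ)) * h₀ k') + e j k|
                    ≤ |∑ k' ∈ Finset.range m, pcoef (Wp j) ((k : ℤ) - (k' : ℤ)) * h₀ k'| + |e j k| :=
                      abs_add_le _ _
                _ ≤ normP (Wp j) * (2 * B) + |e j k| := by
                      have := abs_conv_le (Wp j) m ((k : ℤ)) h₀ (2 * B) (by linarith) (fun k _ => hB2 k)
                      linarith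
          _ = (∑ k ∈ Finset.range (m + j * s), |pcoef (w (j + 1)) ((i : ℤ) - (k : ℤ))|) *
                (normP (Wp j) * (2 * B))
              + ∑ k ∈ Finset.range (m + j * s),
                |pcoef (w (j + 1)) ((i : ℤ) - (k : ℤ))| * |e j k| := by
                simp only [mul_add, Finset.sum_add_distrib, ← Finset.sum_mul]
          _ ≤ normP (w (j + 1)) * (normP (Wp j) * (2 * B))
              + normP (w (j + 1)) * ∑ k ∈ Finset.range (m + j * s), |e j k| := by
                apply add_le_add
                · apply mul_le_mul_of_nonneg_right (sum_abs_pcoef_le _ _ _)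
                  have := normP_nonneg (Wp j)
                  nlinarith
                · rw [Finset.mul_sum]
                  apply Finset.sum_le_sum
                  intro k _
                  exact mul_le_mul_of_nonneg_right (abs_pcoef_le _ _) (abs_nonneg _)
          _ = Cc (j + 1) := by rw [hCsucc]; ring
        rw [sub_neg_eq_add, relu_of_nonneg (by cases abs_le.mp habs; linarith), heC]
        ring
    -- evaluate the last layer
    obtain ⟨pm, hp'⟩ : ∃ pm, p = pm + 1 := ⟨p - 1, by omega⟩
    have hfin : ∀ i : ℕ, convStack s m u b h₀ p i
        = relu ((∑ k' ∈ Finset.range m, pcoef P ((i : ℤ) - (k' : ℤ)) * h₀ k') - β i) := by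
      intro i
      have hbp : b p i = (∑ k ∈ Finset.range (m + pm * s),
          pcoef (w p) ((i : ℤ) - (k : ℤ)) * e pm k) + β i := by
        simp only [hbdef]
        rw [if_pos trivial, show p - 1 = pm by omega]
      have hunf : convStack s m u b h₀ (pm + 1) i
          = relu ((∑ k ∈ Finset.range (m + pm * s),
            u (pm + 1) ((i : ℤ) - (k : ℤ)) * convStack s m u b h₀ pm k) - b (pm + 1) i) := rfl
      have hrw : (∑ k ∈ Finset.range (m + pm * s),
            u p ((i : ℤ) - (k : ℤ)) * convStack s m u b h₀ pm k)
          = ∑ k ∈ Finset.range (m + pm * s), pcoef (w p) ((i : ℤ) - (k : ℤ)) *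
            ((∑ k' ∈ Finset.range m, pcoef (Wp pm) ((k : ℤ) - (k' : ℤ)) * h₀ k') + e pm k) := by
        apply Finset.sum_congr rfl
        intro k _
        rw [key pm (by omega) k]
      have hsplit : (∑ k ∈ Finset.range (m + pm * s),
            pcoef (w p) ((i : ℤ) - (k : ℤ)) *
            ((∑ k' ∈ Finset.range m, pcoef (Wp pm) ((k : ℤ) - (k' : ℤ)) * h₀ k') + e pm k))
          = (∑ k' ∈ Finset.range m, pcoef P ((i : ℤ) - (k' : ℤ)) * h₀ k')
            + ∑ k ∈ Finset.range (m + pm * s),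
              pcoef (w p) ((i : ℤ) - (k : ℤ)) * e pm k := by
        simp only [mul_add, Finset.sum_add_distrib]
        congr 1
        calc ∑ k ∈ Finset.range (m + pm * s), pcoef (w p) ((i : ℤ) - (k : ℤ)) *
              (∑ k' ∈ Finset.range m, pcoef (Wp pm) ((k : ℤ) - (k' : ℤ)) * h₀ k')
            = ∑ k ∈ Finset.range (m + pm * s), ∑ k' ∈ Finset.range m,
                pcoef (w p) ((i : ℤ) - (k : ℤ)) *
                (pcoef (Wp pm) ((k : ℤ) - (k' : ℤ)) * h₀ k') := by
              simp only [Finset.mul_sum]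
        _ = ∑ k' ∈ Finset.range m, ∑ k ∈ Finset.range (m + pm * s),
                pcoef (w p) ((i : ℤ) - (k : ℤ)) *
                (pcoef (Wp pm) ((k : ℤ) - (k' : ℤ)) * h₀ k') := Finset.sum_comm
        _ = ∑ k' ∈ Finset.range m, (∑ k ∈ Finset.range (m + pm * s),
                pcoef (w p) ((i : ℤ) - (k : ℤ)) *
                pcoef (Wp pm) ((k : ℤ) - (k' : ℤ))) * h₀ k' := by
              apply Finset.sum_congr rfl
              intro k' _
              rw [Finset.sum_mul]
              apply Finset.sum_congr rfl
              intro k _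
              ring
        _ = ∑ k' ∈ Finset.range m, pcoef P ((i : ℤ) - (k' : ℤ)) * h₀ k' := by
              apply Finset.sum_congr rfl
              intro k' hk'
              rw [Finset.mem_range] at hk'
              rw [pcoef_mul_conv (Wp pm) (w p) (m + pm * s) k' i
                (by have := hWdeg pm; omega)]
              rw [show Wp pm * w p = P by rw [← hWP, hp', hWsucc pm]]
      rw [hp', hunf, ← hp', hrw, hsplit, hbp]
      congr 1
      ring
    constructor
    · -- the target indices
      intro j hj1 hjQ' k hk
      rw [hfin ((j - 1) * m + k)]
      have hkm : k < m := lt_of_lt_of_le hk (by omega)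
      rw [hPdef, sum_pcoef_Ppoly Q m hm j k hj1 hjQ' hkm h₀]
      have hβ : β ((j - 1) * m + k) = B + knot N j := by
        simp only [hβdef]
        rw [if_pos ⟨j, k, hj1, hjQ', hk, rfl⟩]
        congr 2
        have hdiv : ((j - 1) * m + k) / m = j - 1 := by
          rw [Nat.add_comm, Nat.add_mul_div_right _ _ (by omega : 0 < m),
            Nat.div_eq_of_lt hkm]
          omega
        omega
      rw [hβ]
      have hh : h₀ k = (∑ i, ξ k i * x i) + B := by rw [hh₀]; simp [hkm]
      rw [hh]
      congr 1
      ring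
    · -- the other indices vanish
      intro i' _ hnot
      rw [hfin i']
      have hβ : β i' = 2 * B * normP P + 1 := by
        simp only [hβdef]
        rw [if_neg hnot]
      rw [hβ]
      apply relu_of_nonpos
      have h1 : |∑ k' ∈ Finset.range m, pcoef P ((i' : ℤ) - (k' : ℤ)) * h₀ k'|
          ≤ normP P * (2 * B) := abs_conv_le P m (i' : ℤ) h₀ (2 * B) (by linarith) (fun k _ => hB2 k)
      rw [abs_le] at h1
      have := h1.2
      nlinarith [normP_nonneg P]
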